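/- arXiv:1903.03218 — 4 statements merged into one kernel-verified Lean document; each statement's English description precedes it below -/
import Mathlib

section
/- Let n ≥ 1 and define btw on ZMod n (a ring of n elements thought of cyclically) by btw(x,y,z) iff, identifying elements with representatives in {0,…,n−1}, (x<y<z) ∨ (y<z<x) ∨ (z<x<y). Then for any a,b ∈ ZMod n with n ≥ 3, we have (∀x, x≠a ∧ x≠b → btw(a,b,x)) iff b = a+1. -/
def btwZ (n : ℕ) (x y z : ZMod n) : Prop :=
  (x.val < y.val ∧ y.val < z.val) ∨ (y.val < z.val ∧ z.val < x.val) ∨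
    (z.val < x.val ∧ x.val < y.val)

theorem next_iff_succ (n : ℕ) (hn : 3 ≤ n) (a b : ZMod n) :
    (∀ x : ZMod n, x ≠ a ∧ x ≠ b → btwZ n a b x) ↔ b = a + 1 := by
  haveI : NeZero n := ⟨by omega⟩
  haveI : Fact (1 < n) := ⟨by omega⟩
  have hinj : Function.Injective (ZMod.val (n := n)) := ZMod.val_injective n
  have hA : a.val < n := ZMod.val_lt a
  have hB : b.val < n := ZMod.val_lt b
  have hX : (a.val + 1 < n ∧ (a + 1).val = a.val + 1) ∨
      (a.val + 1 = n ∧ (a + 1).val = 0) := by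
    have h0 : (a + 1).val = (a.val + 1) % n := by
      rw [ZMod.val_add, ZMod.val_one]
    rcases lt_or_ge (a.val + 1) n with h | h
    · exact Or.inl ⟨h, by rw [h0, Nat.mod_eq_of_lt h]⟩
    · have he : a.val + 1 = n := by omega
      exact Or.inr ⟨he, by rw [h0, he, Nat.mod_self]⟩
  constructor
  · intro h
    by_contra hb
    have hne1 : (a + 1).val ≠ a.val := by omega
    have hx1 : a + 1 ≠ a := fun he => hne1 (congrArg ZMod.val he)
    have hx2 : a + 1 ≠ b := fun he => hb he.symm
    have := h (a + 1) ⟨hx1, hx2⟩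
    have hne2 : b.val ≠ (a + 1).val := fun he => hb (hinj he)
    rcases this with ⟨h1, h2⟩ | ⟨h1, h2⟩ | ⟨h1, h2⟩ <;> omega
  · rintro rfl
    rintro x ⟨hxa, hxb⟩
    have h1 : x.val ≠ a.val := fun he => hxa (hinj he)
    have h2 : x.val ≠ (a + 1).val := fun he => hxb (hinj he)
    have hx : x.val < n := ZMod.val_lt x
    unfold btwZ
    omega
end

section
/- Uncompletability of the leader election invariant: there is no function id : ZMod 3 → ℕ and comp : ZMod 3 → ℕ with id(0) = 1, comp(0) = 0, id(2) = 2, comp(2) = 1, such that for all x,y,z with btw(x,y,z) (the cyclic between relation on ZMod 3): id(x), id(y), id(z) are pairwise distinct, 0 < id(x), and (id(y) = comp(x) → id(z) ≤ id(y)). -/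
theorem leader_inv_uncompletable :
    ¬ ∃ (id comp : ZMod 3 → ℕ),
        id 0 = 1 ∧ comp 0 = 0 ∧ id 2 = 2 ∧ comp 2 = 1 ∧
        ∀ x y z : ZMod 3, btwZ 3 x y z →
          (id x ≠ id y ∧ id y ≠ id z ∧ id x ≠ id z) ∧
          0 < id x ∧
          (id y = comp x → id z ≤ id y) := by
  rintro ⟨id, comp, h0, hc0, h2, hc2, h⟩
  have b1 : btwZ 3 1 2 0 := by unfold btwZ; decide
  have b2 : btwZ 3 2 0 1 := by unfold btwZ; decide
  have b3 : btwZ 3 0 1 2 := by unfold btwZ; decide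
  have hpos := (h 1 2 0 b1).2.1
  have hle := (h 2 0 1 b2).2.2 (by rw [h0, hc2])
  have hne := (h 0 1 2 b3).1.1
  rw [h0] at hne
  omega
end

section
/- Leader election safety invariant is inductive with respect to interference: let n ≥ 3 and suppose id : ZMod n → ℕ is injective with all values positive, and comp : ZMod n → ℕ. Suppose the invariant holds in state (id, comp): for all x,y,z with btw(x,y,z), (id(y)=comp(x) → id(z) ≤ id(y)) and (id(x)=comp(x) → id(y) ≤ id(x) ∧ id(z) ≤ id(x)) and (id(x)=comp(x) ∧ id(y)=comp(y) → x=y). If comp' agrees with comp except comp'(p+1) = max(id(p), comp(p)) for some p, and id is unchanged, then the invariant holds in state (id, comp'). -/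
def LeaderInv (n : ℕ) (id comp : ZMod n → ℕ) : Prop :=
  ∀ x y z : ZMod n, btwZ n x y z →
    (id y = comp x → id z ≤ id y) ∧
    (id x = comp x → id y ≤ id x ∧ id z ≤ id x) ∧
    (id x = comp x → id y = comp y → x = y)

theorem leader_inv_inductive (n : ℕ) (hn : 3 ≤ n)
    (id comp comp' : ZMod n → ℕ)
    (hinj : Function.Injective id) (hpos : ∀ x, 0 < id x)
    (hinv : LeaderInv n id comp)
    (p : ZMod n)
    (hupd : comp' (p + 1) = max (id p) (comp p))
    (hframe : ∀ q, q ≠ p + 1 → comp' q = comp q) :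
    LeaderInv n id comp' := by
  haveI : NeZero n := ⟨by omega⟩
  have hvinj : ∀ a b : ZMod n, a.val = b.val → a = b := fun a b h =>
    ZMod.val_injective n h
  have hplt : p.val < n := ZMod.val_lt p
  have hk : (p+1).val = p.val + 1 ∨ (p.val + 1 = n ∧ (p+1).val = 0) := by
    have h1 : (p+1).val = (p.val + 1) % n := by
      rw [ZMod.val_add, ZMod.val_one'']
      omega
    rcases lt_or_ge (p.val+1) n with h | h
    · left; rw [h1, Nat.mod_eq_of_lt h]
    · right
      have hpn : p.val + 1 = n := by omega
      exact ⟨hpn, by rw [h1, hpn, Nat.mod_self]⟩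
  have hpp1 : p + 1 ≠ p := by
    intro h
    have := congrArg ZMod.val h
    omega
  have hne : ∀ a b c : ZMod n, btwZ n a b c → a ≠ b ∧ b ≠ c ∧ a ≠ c := by
    intro a b c h
    unfold btwZ at h
    refine ⟨fun e => ?_, fun e => ?_, fun e => ?_⟩ <;> (subst e; omega)
  have hrot : ∀ a b c : ZMod n, btwZ n a b c → btwZ n c a b := by
    intro a b c h; unfold btwZ at h ⊢; tauto
  have hsucc : ∀ w : ZMod n, w ≠ p → w ≠ p + 1 → btwZ n p (p+1) w := by
    intro w hw1 hw2
    have h1 : w.val ≠ p.val := fun h => hw1 (hvinj _ _ h)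
    have h2 : w.val ≠ (p+1).val := fun h => hw2 (hvinj _ _ h)
    have := ZMod.val_lt w
    unfold btwZ; omega
  have hnomid : ∀ z : ZMod n, ¬ btwZ n (p+1) p z := by
    intro z h
    have := ZMod.val_lt z
    unfold btwZ at h; omega
  have hdrop : ∀ y z : ZMod n, btwZ n (p+1) y z → y ≠ p → z ≠ p → btwZ n p y z := by
    intro y z h hy hz
    have h1 : y.val ≠ p.val := fun h => hy (hvinj _ _ h)
    have h2 : z.val ≠ p.val := fun h => hz (hvinj _ _ h)
    have := ZMod.val_lt y
    have := ZMod.val_lt z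
    unfold btwZ at h ⊢; omega
  have hmaxeq : ∀ w : ℕ, id (p+1) = max (id p) (comp p) →
      id (p+1) = comp p ∧ id p ≤ id (p+1) := by
    intro _ h
    rcases max_choice (id p) (comp p) with hm | hm
    · rw [hm] at h; exact absurd (hinj h) hpp1
    · rw [hm] at h
      refine ⟨h, ?_⟩
      rw [h, ← hm]; exact Nat.le_max_left _ _
  intro x y z hbtw
  by_cases hx : x = p + 1
  · subst hx
    obtain ⟨hxy, hyz, hxz⟩ := hne _ _ _ hbtw
    refine ⟨?_, ?_, ?_⟩
    · -- (A)
      intro hyc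
      rw [hupd] at hyc
      by_cases hyp : y = p
      · exact absurd hbtw (by rw [hyp] at hbtw; exact absurd hbtw (hnomid z))
      · have hycomp : id y = comp p := by
          rcases max_choice (id p) (comp p) with hm | hm
          · rw [hm] at hyc; exact absurd (hinj hyc) hyp
          · rw [hm] at hyc; exact hyc
        have hple : id p ≤ id y := by rw [hyc]; exact Nat.le_max_left _ _
        by_cases hzp : z = p
        · rw [hzp]; exact hple
        · exact (hinv p y z (hdrop y z hbtw hyp hzp)).1 hycomp
    · -- (B)
      intro hxc
      rw [hupd] at hxc
      obtain ⟨heq, hple⟩ := hmaxeq 0 hxc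
      have hy_np : y ≠ p := by
        intro h; rw [h] at hbtw; exact hnomid z hbtw
      constructor
      · exact (hinv p (p+1) y (hsucc y hy_np (Ne.symm hxy))).1 heq
      · by_cases hzp : z = p
        · rw [hzp]; exact hple
        · exact (hinv p (p+1) z (hsucc z hzp (Ne.symm hxz))).1 heq
    · -- (C)
      intro hxc hyc
      rw [hupd] at hxc
      obtain ⟨heq, hple⟩ := hmaxeq 0 hxc
      by_cases hyp : y = p
      · rw [hyp, hframe p (Ne.symm hpp1)] at hyc
        exact absurd (hinj (heq.trans hyc.symm)) hpp1
      · rw [hframe y (Ne.symm hxy)] at hyc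
        have hb := hsucc y hyp (Ne.symm hxy)
        have h1 : id y ≤ id (p+1) := (hinv p (p+1) y hb).1 heq
        have h2 : id (p+1) ≤ id y := ((hinv y p (p+1) (hrot _ _ _ hb)).2.1 hyc).2
        exact absurd (hinj (le_antisymm h2 h1)) hxy
  · have hcx : comp' x = comp x := hframe x hx
    refine ⟨fun h => (hinv x y z hbtw).1 (by rwa [hcx] at h),
      fun h => (hinv x y z hbtw).2.1 (by rwa [hcx] at h), ?_⟩
    intro hxc hyc
    rw [hcx] at hxc
    by_cases hy : y = p + 1
    · subst hy
      rw [hupd] at hyc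
      obtain ⟨heq, hple⟩ := hmaxeq 0 hyc
      by_cases hxp : x = p
      · rw [hxp] at hxc
        exact absurd (hinj (heq.trans hxc.symm)) hpp1
      · have hb := hsucc x hxp hx
        have h1 : id x ≤ id (p+1) := (hinv p (p+1) x hb).1 heq
        have h2 : id (p+1) ≤ id x := ((hinv x p (p+1) (hrot _ _ _ hb)).2.1 hxc).2
        exact absurd (hinj (le_antisymm h1 h2)) hx
    · rw [hframe y hy] at hyc
      exact (hinv x y z hbtw).2.2 hxc hyc
end

section
/- Leader election safety: under the hypotheses that id : ZMod n → ℕ (n ≥ 3) is injective with positive values, comp is initially identically 0, and transitions update comp(p+1) := max(id(p), comp(p)) for a nondeterministically chosen p (leaving everything else unchanged), every reachable state satisfies: there do not exist x,y,z with btw(x,y,z), id(x)=comp(x), and id(y)=comp(y). -/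
/-- One leader-election step: some process `p` sends `max (id p) (comp p)`
to its successor; everything else is unchanged. -/
def LeaderStep (n : ℕ) (id : ZMod n → ℕ) (comp comp' : ZMod n → ℕ) : Prop :=
  ∃ p : ZMod n, comp' (p + 1) = max (id p) (comp p) ∧
    ∀ q, q ≠ p + 1 → comp' q = comp q

section Aux
set_option linter.unusedSectionVars false
variable {n : ℕ} [NeZero n]

lemma succ_val_aux (hn : 3 ≤ n) (p : ZMod n) : (p + 1).val = (p.val + 1) % n := by
  haveI : Fact (1 < n) := ⟨by omega⟩
  rw [ZMod.val_add, ZMod.val_one]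

lemma not_btw_self_left {x z : ZMod n} : ¬ btwZ n x x z := by
  unfold btwZ; omega

lemma not_btw_ends_eq {x y : ZMod n} : ¬ btwZ n x y x := by
  unfold btwZ; omega

lemma not_btw_adj (hn : 3 ≤ n) (p w : ZMod n) : ¬ btwZ n p w (p + 1) := by
  have hs := succ_val_aux hn p
  have h1 : p.val < n := ZMod.val_lt p
  have h2 : w.val < n := ZMod.val_lt w
  unfold btwZ
  rcases Nat.lt_or_ge (p.val + 1) n with h | h
  · rw [Nat.mod_eq_of_lt h] at hs; omega
  · have : p.val + 1 = n := by omega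
    rw [this, Nat.mod_self] at hs; omega

lemma btw_all (hn : 3 ≤ n) (p X : ZMod n) (h1 : X ≠ p + 1) (h2 : X ≠ p) :
    btwZ n (p + 1) X p := by
  have hs := succ_val_aux hn p
  have hp : p.val < n := ZMod.val_lt p
  have hx : X.val < n := ZMod.val_lt X
  have hne1 : X.val ≠ (p + 1).val := fun h => h1 (ZMod.val_injective n h)
  have hne2 : X.val ≠ p.val := fun h => h2 (ZMod.val_injective n h)
  unfold btwZ
  rcases Nat.lt_or_ge (p.val + 1) n with h | h
  · rw [Nat.mod_eq_of_lt h] at hs; omega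
  · have : p.val + 1 = n := by omega
    rw [this, Nat.mod_self] at hs; omega

lemma btw_step (hn : 3 ≤ n) {V W p : ZMod n} (hV : V ≠ p + 1)
    (h : btwZ n V W (p + 1)) : W = p ∨ btwZ n V W p := by
  have hs := succ_val_aux hn p
  have hp : p.val < n := ZMod.val_lt p
  have hw : W.val < n := ZMod.val_lt W
  have hv : V.val < n := ZMod.val_lt V
  have hne1 : V.val ≠ (p + 1).val := fun h => hV (ZMod.val_injective n h)
  by_cases hWp : W = p
  · exact Or.inl hWp
  have hne2 : W.val ≠ p.val := fun h => hWp (ZMod.val_injective n h)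
  right
  unfold btwZ at h ⊢
  rcases Nat.lt_or_ge (p.val + 1) n with hc | hc
  · rw [Nat.mod_eq_of_lt hc] at hs; omega
  · have : p.val + 1 = n := by omega
    rw [this, Nat.mod_self] at hs; omega

end Aux

theorem leader_election_safety (n : ℕ) (hn : 3 ≤ n)
    (id : ZMod n → ℕ)
    (hinj : Function.Injective id) (hpos : ∀ x, 0 < id x) :
    ∀ comp : ZMod n → ℕ,
      Relation.ReflTransGen (LeaderStep n id) (fun _ => 0) comp →
      ¬ ∃ x y z : ZMod n, btwZ n x y z ∧ id x = comp x ∧ id y = comp y := by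
  haveI : NeZero n := ⟨by omega⟩
  intro comp hreach
  suffices hinv : (∀ L : ZMod n, comp L = id L → ∀ X, id X ≤ id L) ∧
      (∀ V N W : ZMod n, comp N = id V → btwZ n V W N → id W < id V) by
    rintro ⟨x, y, z, hbtw, hx, hy⟩
    have h1 := hinv.1 x hx.symm y
    have h2 := hinv.1 y hy.symm x
    have hxy : x = y := hinj (le_antisymm h2 h1)
    subst hxy
    exact not_btw_self_left hbtw
  induction hreach with
  | refl =>
    constructor
    · intro L hL
      exact absurd hL.symm (by have := hpos L; omega)
    · intro V N W hVN
      exact absurd hVN.symm (by have := hpos V; omega)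
  | tail hsteps hstep ih =>
    obtain ⟨p, hset, hframe⟩ := hstep
    rename_i b c
    have hpne : p + 1 ≠ p := by
      intro h
      have := succ_val_aux hn p
      have hp : p.val < n := ZMod.val_lt p
      rw [h] at this
      rcases Nat.lt_or_ge (p.val + 1) n with hc | hc
      · rw [Nat.mod_eq_of_lt hc] at this; omega
      · have h2 : p.val + 1 = n := by omega
        rw [h2, Nat.mod_self] at this; omega
    constructor
    · intro L hL X
      by_cases hLp : L = p + 1
      · subst hLp
        rw [hset] at hL
        rcases max_choice (id p) (b p) with hm | hm
        · rw [hm] at hL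
          exact absurd (hinj hL).symm hpne
        · rw [hm] at hL
          -- b p = id (p+1); use ih.2 with V = p+1, N = p
          by_cases hX1 : X = p + 1
          · subst hX1; exact le_refl _
          by_cases hX2 : X = p
          · subst hX2
            have := le_max_left (id X) (b X)
            rw [hm, hL] at this
            exact this
          · exact le_of_lt (ih.2 (p + 1) p X hL (btw_all hn p X hX1 hX2))
      · rw [hframe L hLp] at hL
        exact ih.1 L hL X
    · intro V N W hVN hbtw
      by_cases hNp : N = p + 1
      · subst hNp
        rw [hset] at hVN
        by_cases hVp1 : V = p + 1
        · subst hVp1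
          exact absurd hbtw not_btw_ends_eq
        rcases max_choice (id p) (b p) with hm | hm
        · rw [hm] at hVN
          have : p = V := hinj hVN
          subst this
          exact absurd hbtw (not_btw_adj hn p W)
        · rw [hm] at hVN
          rcases btw_step hn hVp1 hbtw with hWp | hb
          · subst hWp
            have hle : id W ≤ id V := by
              have := le_max_left (id W) (b W)
              rw [hm, hVN] at this
              exact this
            rcases lt_or_eq_of_le hle with h | h
            · exact h
            · have : W = V := hinj h
              subst this
              exact absurd hbtw not_btw_self_left
          · exact ih.2 V p W hVN hb
      · rw [hframe N hNp] at hVN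
        exact ih.2 V N W hVN hbtw
end
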